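/- Let R be a K-subalgebra of K⟦x⟧ such that the quotient K⟦x⟧/R has finite length as an R-module, so that o(R) is a numerical semigroup with conductor c(o(R)). Then every nonzero f ∈ K⟦x⟧ with o(f) ≥ c(o(R)) belongs to R; equivalently, x^{c(o(R))}·K⟦x⟧ ⊆ R. -/

import Mathlib

set_option synthInstance.maxHeartbeats 1000000
set_option maxHeartbeats 1000000

open PowerSeries

/-- The order of a formal power series: the least `i` such that the coefficient of `x^i`
is nonzero (junk value `0` for the zero series). -/
noncomputable def ord (K : Type*) [Field K] (f : PowerSeries K) : ℕ :=
  sInf {i | coeff i f ≠ 0}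

/-- The set of orders of nonzero elements of a subalgebra `R ⊆ K⟦x⟧`. -/
def oSet (K : Type*) [Field K] (R : Subalgebra K (PowerSeries K)) : Set ℕ :=
  {n | ∃ f ∈ R, f ≠ 0 ∧ ord K f = n}

/-- The quotient `K⟦x⟧/R` has finite length as an `R`-module. -/
def FiniteLengthQuot (K : Type*) [Field K] (R : Subalgebra K (PowerSeries K)) : Prop :=
  IsFiniteLength R (PowerSeries K ⧸ LinearMap.range (Algebra.linearMap R (PowerSeries K)))

/-- The conductor of a subset `S ⊆ ℕ`: the least `c` such that every `n ≥ c` lies in `S`. -/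
noncomputable def natConductor (S : Set ℕ) : ℕ := sInf {c | ∀ n, c ≤ n → n ∈ S}

set_option maxHeartbeats 4000000 in
lemma key (K : Type*) [Field K] (R : Subalgebra K (PowerSeries K))
    (h : FiniteLengthQuot K R) :
    ∃ N : ℕ, 1 ≤ N ∧ ∀ g : PowerSeries K, (X : PowerSeries K) ^ N * g ∈ R := by
  classical
  letI i1 : Module R (PowerSeries K) := inferInstance
  letI i2 : Ring R := inferInstance
  set R₀ : Submodule R (PowerSeries K) :=
    LinearMap.range (Algebra.linearMap R (PowerSeries K)) with hR₀
  have memR₀ : ∀ f : PowerSeries K, f ∈ R₀ ↔ f ∈ R := by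
    intro f
    constructor
    · rintro ⟨r, rfl⟩; exact r.2
    · intro hf; exact ⟨⟨f, hf⟩, rfl⟩
  letI i3 : AddCommGroup (PowerSeries K ⧸ R₀) := inferInstance
  letI i4 : Module R (PowerSeries K ⧸ R₀) := inferInstance
  obtain ⟨hNoeth, hArt⟩ := isFiniteLength_iff_isNoetherian_isArtinian.mp h
  haveI := hNoeth
  haveI := hArt
  -- the submodules of interest
  set S : ℕ → Submodule R (PowerSeries K) :=
    fun n => (Ideal.span {(X : PowerSeries K) ^ n}).restrictScalars R with hS
  have memS : ∀ (n : ℕ) (f : PowerSeries K), f ∈ S n ↔ (X : PowerSeries K) ^ n ∣ f := by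
    intro n f
    simp [hS, Ideal.mem_span_singleton]
  have Santi : ∀ {n m : ℕ}, n ≤ m → S m ≤ S n := by
    intro n m hnm f hf
    rw [memS] at hf ⊢
    exact dvd_trans (pow_dvd_pow _ hnm) hf
  set Q : ℕ →o (Submodule R (PowerSeries K ⧸ R₀))ᵒᵈ :=
    ⟨fun n => Submodule.map R₀.mkQ (S n), fun n m hnm => Submodule.map_mono (Santi hnm)⟩ with hQ
  obtain ⟨N₀, hstab⟩ := IsArtinian.monotone_stabilizes Q
  set N := N₀ + 1 with hN
  have hstab' : ∀ m, N ≤ m → Q N = Q m := by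
    intro m hm
    rw [← hstab N (by omega), ← hstab m (by omega)]
  have heqQ : ∀ m, N ≤ m →
      Submodule.map R₀.mkQ (S N) = Submodule.map R₀.mkQ (S m) := by
    intro m hm
    exact congrArg OrderDual.ofDual (hstab' m hm)
  -- a nontrivial element r₀ ∈ R of the form X^N * u with u a unit
  have hXN : R₀.mkQ ((X : PowerSeries K) ^ N) ∈ Submodule.map R₀.mkQ (S (N + 1)) := by
    rw [← heqQ (N + 1) (by omega)]
    exact ⟨X ^ N, (memS N _).mpr dvd_rfl, rfl⟩
  obtain ⟨p, hp, hpq⟩ := hXN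
  rw [SetLike.mem_coe, memS] at hp
  obtain ⟨q, rfl⟩ := hp
  have hsub : (X : PowerSeries K) ^ N - X ^ (N + 1) * q ∈ R₀ := by
    rw [← Submodule.Quotient.mk_eq_zero, ← R₀.mkQ_apply, map_sub, hpq, sub_self]
  set u : PowerSeries K := 1 - X * q with hu
  have hru : (X : PowerSeries K) ^ N * u = X ^ N - X ^ (N + 1) * q := by
    rw [hu]; ring
  have huunit : IsUnit u := by
    rw [isUnit_iff_constantCoeff]
    simp [hu]
  obtain ⟨v, huv⟩ : ∃ v, u * v = 1 := ⟨↑huunit.unit⁻¹, huunit.mul_val_inv⟩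
  set r₀ : R := ⟨X ^ N * u, by rw [hru, ← memR₀]; exact hsub⟩ with hr₀
  -- the maximal ideal of R
  set J : Ideal R := RingHom.ker ((constantCoeff).comp (R.val : R →+* PowerSeries K)) with hJ
  have memJ : ∀ r : R, r ∈ J ↔ constantCoeff (r : PowerSeries K) = 0 := by
    intro r; simp [hJ, RingHom.mem_ker]
  have hr₀J : r₀ ∈ J := by
    rw [memJ, hr₀]
    simp [hN, pow_succ, mul_assoc]
  -- Nakayama setup
  have hle : Submodule.map R₀.mkQ (S N) ≤ J • Submodule.map R₀.mkQ (S N) := by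
    rintro - ⟨f, hf, rfl⟩
    rw [SetLike.mem_coe, memS] at hf
    obtain ⟨g, rfl⟩ := hf
    have h2 : R₀.mkQ (X ^ N * g) ∈ Submodule.map R₀.mkQ (S (N + N)) := by
      rw [← heqQ (N + N) (by omega)]
      exact ⟨X ^ N * g, (memS N _).mpr ⟨g, rfl⟩, rfl⟩
    obtain ⟨p', hp', hpq'⟩ := h2
    rw [SetLike.mem_coe, memS] at hp'
    obtain ⟨q', rfl⟩ := hp'
    have hfac : (X : PowerSeries K) ^ (N + N) * q' = (r₀ : PowerSeries K) * (X ^ N * (v * q')) := by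
      rw [hr₀]
      calc (X : PowerSeries K) ^ (N + N) * q' = X ^ (N + N) * ((u * v) * q') := by rw [huv, one_mul]
        _ = X ^ N * u * (X ^ N * (v * q')) := by rw [pow_add]; ring
    rw [← hpq', hfac]
    have : R₀.mkQ ((r₀ : PowerSeries K) * (X ^ N * (v * q'))) = r₀ • R₀.mkQ (X ^ N * (v * q')) := by
      rw [← map_smul]; rfl
    rw [this]
    exact Submodule.smul_mem_smul hr₀J ⟨X ^ N * (v * q'), (memS N _).mpr ⟨v * q', rfl⟩, rfl⟩
  have hfg : (Submodule.map R₀.mkQ (S N)).FG := IsNoetherian.noetherian _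
  obtain ⟨r, hr1, hr0⟩ :=
    Submodule.exists_sub_one_mem_and_smul_eq_zero_of_fg_of_le_smul J _ hfg hle
  -- r is a unit of K⟦x⟧
  have hrc : constantCoeff (r : PowerSeries K) = 1 := by
    rw [memJ] at hr1
    have : constantCoeff ((r : PowerSeries K) - 1) = 0 := hr1
    rw [map_sub, map_one, sub_eq_zero] at this
    exact this
  have hrunit : IsUnit (r : PowerSeries K) := by
    rw [isUnit_iff_constantCoeff, hrc]; exact isUnit_one
  obtain ⟨w, hrw⟩ : ∃ w, (r : PowerSeries K) * w = 1 := ⟨↑hrunit.unit⁻¹, hrunit.mul_val_inv⟩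
  refine ⟨N, by omega, fun g => ?_⟩
  have hmem : R₀.mkQ (X ^ N * (w * g)) ∈ Submodule.map R₀.mkQ (S N) :=
    ⟨X ^ N * (w * g), (memS N _).mpr ⟨w * g, rfl⟩, rfl⟩
  have hz := hr0 _ hmem
  have : r • R₀.mkQ (X ^ N * (w * g)) = R₀.mkQ ((r : PowerSeries K) * (X ^ N * (w * g))) := by
    rw [← map_smul]; rfl
  rw [this] at hz
  have hz' : (r : PowerSeries K) * (X ^ N * (w * g)) ∈ R₀ := by
    rwa [R₀.mkQ_apply, Submodule.Quotient.mk_eq_zero] at hz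
  have heq : (X : PowerSeries K) ^ N * g = (r : PowerSeries K) * (X ^ N * (w * g)) := by
    calc (X : PowerSeries K) ^ N * g = ((r : PowerSeries K) * w) * (X ^ N * g) := by
          rw [hrw, one_mul]
      _ = (r : PowerSeries K) * (X ^ N * (w * g)) := by ring
  rw [heq, ← memR₀]
  exact hz'

section
variable {K : Type*} [Field K]

lemma exists_coeff_ne {f : PowerSeries K} (hf : f ≠ 0) : {i | coeff i f ≠ 0}.Nonempty := by
  by_contra hemp
  rw [Set.not_nonempty_iff_eq_empty] at hemp
  refine hf (PowerSeries.ext fun n => ?_)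
  have : n ∉ {i | coeff i f ≠ 0} := by rw [hemp]; exact Set.notMem_empty n
  simpa using this

lemma ord_coeff_ne {f : PowerSeries K} (hf : f ≠ 0) : coeff (ord K f) f ≠ 0 :=
  Nat.sInf_mem (exists_coeff_ne hf)

lemma coeff_of_lt_ord {f : PowerSeries K} {i : ℕ} (hi : i < ord K f) : coeff i f = 0 := by
  by_contra hc
  exact Nat.notMem_of_lt_sInf hi hc

lemma X_pow_ord_dvd {f : PowerSeries K} : (X : PowerSeries K) ^ (ord K f) ∣ f :=
  X_pow_dvd_iff.mpr fun _ hm => coeff_of_lt_ord hm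

lemma ord_X_pow (n : ℕ) : ord K ((X : PowerSeries K) ^ n) = n := by
  have : {i | coeff i ((X : PowerSeries K) ^ n) ≠ 0} = {n} := by
    ext i
    simp [coeff_X_pow]
  rw [ord, this, csInf_singleton]

end

/-- If `K⟦x⟧/R` has finite length as an `R`-module, then every nonzero power series whose
order is at least the conductor of `o(R)` belongs to `R`; equivalently
`x^{c(o(R))}·K⟦x⟧ ⊆ R`. -/
theorem stmt_3 (K : Type*) [Field K] (R : Subalgebra K (PowerSeries K))
    (h : FiniteLengthQuot K R) :
    (∀ f : PowerSeries K, f ≠ 0 → natConductor (oSet K R) ≤ ord K f → f ∈ R) ∧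
      (∀ g : PowerSeries K, (X : PowerSeries K) ^ natConductor (oSet K R) * g ∈ R) := by
  obtain ⟨N, hN1, hNmem⟩ := key K R h
  set c := natConductor (oSet K R) with hcdef
  have hcond : ∀ n, N ≤ n → n ∈ oSet K R := by
    intro n hn
    refine ⟨X ^ n, ?_, pow_ne_zero _ X_ne_zero, ord_X_pow n⟩
    have : (X : PowerSeries K) ^ n = X ^ N * X ^ (n - N) := by
      rw [← pow_add]
      congr 1
      omega
    rw [this]
    exact hNmem _
  have hc : ∀ n, c ≤ n → n ∈ oSet K R := Nat.sInf_mem (⟨N, hcond⟩ :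
    {c' | ∀ n, c' ≤ n → n ∈ oSet K R}.Nonempty)
  have main : ∀ (k : ℕ) (f : PowerSeries K), f ≠ 0 → c ≤ ord K f → N ≤ ord K f + k → f ∈ R := by
    intro k
    induction k with
    | zero =>
      intro f hf hcf hNf
      obtain ⟨g, hg⟩ := X_pow_ord_dvd (f := f)
      have hfe : (X : PowerSeries K) ^ N * (X ^ (ord K f - N) * g) = f := by
        rw [← mul_assoc, ← pow_add, show N + (ord K f - N) = ord K f from by omega, ← hg]
      rw [← hfe]
      exact hNmem _
    | succ k ih =>
      intro f hf hcf hNf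
      by_cases hcase : N ≤ ord K f + k
      · exact ih f hf hcf hcase
      · obtain ⟨g, hgR, hg0, hgm⟩ := hc (ord K f) hcf
        have hga : coeff (ord K f) g ≠ 0 := by
          have := ord_coeff_ne hg0
          rwa [hgm] at this
        set a : K := coeff (ord K f) f / coeff (ord K f) g with ha
        have hcoeffs : ∀ i, i ≤ ord K f → coeff i (f - a • g) = 0 := by
          intro i hi
          rcases lt_or_eq_of_le hi with hi | rfl
          · rw [map_sub, coeff_of_lt_ord hi, map_smul, smul_eq_mul,
              coeff_of_lt_ord (by rw [hgm]; exact hi), mul_zero, sub_zero]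
          · rw [map_sub, map_smul, smul_eq_mul, ha, div_mul_cancel₀ _ hga, sub_self]
        by_cases hf' : f - a • g = 0
        · have : f = a • g := by rwa [sub_eq_zero] at hf'
          rw [this]
          exact Subalgebra.smul_mem R hgR a
        · have hordf' : ord K f + 1 ≤ ord K (f - a • g) := by
            refine le_csInf (exists_coeff_ne hf') fun i hi => ?_
            by_contra hlt
            push_neg at hlt
            exact hi (hcoeffs i (by omega))
          have hmem' : f - a • g ∈ R :=
            ih _ hf' (le_trans hcf (by omega)) (by omega)
          have : f = (f - a • g) + a • g := by ring
          rw [this]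
          exact add_mem hmem' (Subalgebra.smul_mem R hgR a)
  constructor
  · intro f hf hcf
    exact main N f hf hcf (by omega)
  · intro g
    by_cases hg : g = 0
    · rw [hg, mul_zero]
      exact zero_mem R
    · have hfne : (X : PowerSeries K) ^ c * g ≠ 0 :=
        mul_ne_zero (pow_ne_zero _ X_ne_zero) hg
      refine main N _ hfne ?_ (by omega)
      refine le_csInf (exists_coeff_ne hfne) fun i hi => ?_
      by_contra hlt
      push_neg at hlt
      rw [Set.mem_setOf_eq, coeff_X_pow_mul', if_neg (by omega)] at hi
      exact hi rfl
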